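/- For ψ > 0 and any integer k ≥ 0, ∫_ℝ e^{-ψπ²x² - 2πi x u} x^k dx = (1 / ((2πi)^k √π ψ^{(k+1)/2})) · e^{-u²/ψ} · H_k(u/√ψ), where H_k is the k-th Hermite polynomial. -/

import Mathlib

open Complex

/-- The physicists' Hermite polynomial `H n x = (-1)^n e^{x^2} (d/dx)^n e^{-x^2}`. -/
noncomputable def hermiteFun (n : ℕ) (x : ℝ) : ℝ :=
  (-1 : ℝ) ^ n * Real.exp (x ^ 2) * iteratedDeriv n (fun t : ℝ => Real.exp (-t ^ 2)) x

open MeasureTheory Real FourierTransform in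
lemma iteratedDeriv_clm_comp' {F G : Type*} [NormedAddCommGroup F] [NormedSpace ℝ F]
    [NormedAddCommGroup G] [NormedSpace ℝ G] (L : F →L[ℝ] G) {f : ℝ → F}
    (hf : ContDiff ℝ (⊤ : ℕ∞) f) (n : ℕ) (x : ℝ) :
    iteratedDeriv n (fun t => L (f t)) x = L (iteratedDeriv n f x) := by
  have h : ContDiff ℝ (n : WithTop ℕ∞) f := hf.of_le (by exact_mod_cast le_top)
  have := L.iteratedFDeriv_comp_left (h.contDiffAt (x := x)) le_rfl
  simp only [iteratedDeriv_eq_iteratedFDeriv, Function.comp_def] at *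
  rw [this]
  rfl

open MeasureTheory Real FourierTransform in
theorem stmt1 (ψ : ℝ) (hψ : 0 < ψ) (k : ℕ) (u : ℝ) :
    (∫ x : ℝ, Complex.exp (-((ψ : ℂ) * (Real.pi : ℂ) ^ 2 * (x : ℂ) ^ 2)
        - 2 * (Real.pi : ℂ) * Complex.I * (x : ℂ) * (u : ℂ)) * (x : ℂ) ^ k)
      = (1 / ((2 * (Real.pi : ℂ) * Complex.I) ^ k * (Real.sqrt Real.pi : ℂ)
            * ((Real.sqrt ψ : ℝ) : ℂ) ^ (k + 1)))
        * (Real.exp (-u ^ 2 / ψ) : ℂ) * ((hermiteFun k (u / Real.sqrt ψ) : ℝ) : ℂ) := by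
  have hb : 0 < ψ * Real.pi := mul_pos hψ Real.pi_pos
  have hπ2 : 0 < ψ * Real.pi ^ 2 := by positivity
  have hsψ : (0:ℝ) < Real.sqrt ψ := Real.sqrt_pos.mpr hψ
  have hsπ : (0:ℝ) < Real.sqrt Real.pi := Real.sqrt_pos.mpr Real.pi_pos
  set c : ℝ := (Real.sqrt ψ)⁻¹ with hc
  set g : ℝ → ℂ := fun x => Complex.exp (-(Real.pi:ℂ) * ((ψ * Real.pi : ℝ):ℂ) * (x:ℂ)^2) with hg
  set f : ℝ → ℝ := fun t => Real.exp (-t ^ 2) with hf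
  have hgr : ∀ x : ℝ, g x = ((Real.exp (-(ψ * Real.pi ^ 2) * x ^ 2) : ℝ) : ℂ) := by
    intro x
    have harg : (-(Real.pi:ℂ) * ((ψ * Real.pi : ℝ):ℂ) * (x:ℂ)^2)
        = ((-(ψ * Real.pi ^ 2) * x ^ 2 : ℝ) : ℂ) := by push_cast; ring
    rw [hg]
    simp only [harg, Complex.ofReal_exp]
  have hInt : ∀ (n : ℕ), (n : ℕ∞) ≤ (⊤ : ℕ∞) → Integrable (fun x : ℝ => x ^ n • g x) := by
    intro n _
    have h1 : Integrable (fun x : ℝ => x ^ n * Real.exp (-(ψ * Real.pi ^ 2) * x ^ 2)) := by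
      simpa [Real.rpow_natCast] using
        integrable_rpow_mul_exp_neg_mul_sq hπ2
          (lt_of_lt_of_le neg_one_lt_zero (Nat.cast_nonneg n))
    have h2 := h1.ofReal (𝕜 := ℂ)
    apply h2.congr
    filter_upwards with x
    rw [hgr x, real_smul]
    norm_cast
  have FT : 𝓕 g = fun t : ℝ => 1 / ((ψ * Real.pi : ℝ):ℂ) ^ (1/2 : ℂ)
      * Complex.exp (-(Real.pi:ℂ) / ((ψ * Real.pi : ℝ):ℂ) * (t:ℂ)^2) :=
    fourier_gaussian_pi (by simpa using hb)
  -- the continuous linear map combining `ofReal` and the constant factor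
  set L : ℝ →L[ℝ] ℂ := (1 / ((ψ * Real.pi : ℝ):ℂ) ^ (1/2 : ℂ)) • Complex.ofRealCLM with hL
  have hFT2 : 𝓕 g = fun t : ℝ => L (f (c * t)) := by
    rw [FT]
    funext t
    have harg : (-(Real.pi:ℂ) / ((ψ * Real.pi : ℝ):ℂ) * (t:ℂ)^2)
        = ((-(c * t) ^ 2 : ℝ) : ℂ) := by
      have hψ0 : ((ψ:ℂ)) ≠ 0 := Complex.ofReal_ne_zero.mpr hψ.ne'
      have hπ0 : ((Real.pi:ℂ)) ≠ 0 := Complex.ofReal_ne_zero.mpr Real.pi_ne_zero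
      have hcsq : (c * t) ^ 2 = t ^ 2 / ψ := by
        rw [hc, mul_pow, inv_pow, Real.sq_sqrt hψ.le, inv_mul_eq_div]
      rw [hcsq]
      push_cast
      field_simp
    rw [harg]
    simp only [hL, hf, ContinuousLinearMap.smul_apply, Complex.ofRealCLM_apply, smul_eq_mul,
      Complex.ofReal_exp]
  have hfsmooth : ContDiff ℝ (⊤ : ℕ∞) f := by
    rw [hf]
    exact Real.contDiff_exp.comp ((contDiff_id.pow 2).neg)
  have hfcsmooth : ContDiff ℝ (⊤ : ℕ∞) (fun t : ℝ => f (c * t)) :=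
    hfsmooth.comp (contDiff_const.mul contDiff_id)
  -- compute the iterated derivative of the Fourier transform
  have D1 : iteratedDeriv k (𝓕 g) u = L ((c ^ k) • iteratedDeriv k f (c * u)) := by
    rw [hFT2, iteratedDeriv_clm_comp' L hfcsmooth k u,
      iteratedDeriv_comp_const_smul (hfsmooth.of_le (by exact_mod_cast le_top)) c]
  have D3 : iteratedDeriv k f (c * u)
      = (-1 : ℝ) ^ k * Real.exp (-(c * u) ^ 2) * hermiteFun k (c * u) := by
    rw [hermiteFun, ← hf]
    have h4 : ((-1:ℝ) ^ k) * ((-1:ℝ) ^ k) = 1 := by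
      rw [← pow_add]; exact Even.neg_one_pow ⟨k, rfl⟩
    have h5 : Real.exp (-(c * u) ^ 2) * Real.exp ((c * u) ^ 2) = 1 := by
      rw [← Real.exp_add]; simp
    calc iteratedDeriv k f (c * u)
        = (((-1:ℝ)^k) * ((-1:ℝ)^k)) * (Real.exp (-(c*u)^2) * Real.exp ((c*u)^2))
          * iteratedDeriv k f (c * u) := by rw [h4, h5]; ring
      _ = (-1:ℝ)^k * Real.exp (-(c*u)^2)
          * ((-1:ℝ)^k * Real.exp ((c*u)^2) * iteratedDeriv k f (c*u)) := by ring
  -- relate iterated derivative of FT to the integral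
  have key : iteratedDeriv k (𝓕 g) u
      = 𝓕 (fun x : ℝ => (-2 * (Real.pi:ℂ) * Complex.I * (x:ℂ)) ^ k • g x) u := by
    rw [Real.iteratedDeriv_fourier (N := ⊤) hInt le_top]
  have expand : 𝓕 (fun x : ℝ => (-2 * (Real.pi:ℂ) * Complex.I * (x:ℂ)) ^ k • g x) u
      = (-2 * (Real.pi:ℂ) * Complex.I) ^ k
        * ∫ x : ℝ, Complex.exp (-((ψ : ℂ) * (Real.pi : ℂ) ^ 2 * (x : ℂ) ^ 2)
            - 2 * (Real.pi : ℂ) * Complex.I * (x : ℂ) * (u : ℂ)) * (x : ℂ) ^ k := by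
    rw [Real.fourier_real_eq_integral_exp_smul, ← MeasureTheory.integral_const_mul]
    congr 1
    funext x
    have hexp : ((↑(-2 * Real.pi * x * u) * Complex.I) + (-(Real.pi:ℂ) * ((ψ * Real.pi : ℝ):ℂ) * (x:ℂ)^2) : ℂ)
        = -((ψ : ℂ) * (Real.pi : ℂ) ^ 2 * (x : ℂ) ^ 2)
          - 2 * (Real.pi : ℂ) * Complex.I * (x : ℂ) * (u : ℂ) := by push_cast; ring
    simp only [hg, smul_eq_mul]
    rw [mul_pow, ← hexp, Complex.exp_add]
    ring
  -- identify the constant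
  have hsqrt : ((ψ * Real.pi : ℝ):ℂ) ^ (1/2 : ℂ)
      = ((Real.sqrt ψ * Real.sqrt Real.pi : ℝ) : ℂ) := by
    rw [← Real.sqrt_mul hψ.le, Real.sqrt_eq_rpow, Complex.ofReal_cpow hb.le]
    norm_num
  -- assemble
  have hcu : c * u = u / Real.sqrt ψ := inv_mul_eq_div _ _
  have hnegsq : -(c * u) ^ 2 = -u ^ 2 / ψ := by
    rw [hcu, div_pow, Real.sq_sqrt hψ.le, neg_div]
  have known : (-2 * (Real.pi:ℂ) * Complex.I) ^ k
        * ∫ x : ℝ, Complex.exp (-((ψ : ℂ) * (Real.pi : ℂ) ^ 2 * (x : ℂ) ^ 2)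
            - 2 * (Real.pi : ℂ) * Complex.I * (x : ℂ) * (u : ℂ)) * (x : ℂ) ^ k
      = (1 / (((Real.sqrt ψ : ℝ):ℂ) * ((Real.sqrt Real.pi : ℝ):ℂ)))
        * ((((Real.sqrt ψ : ℝ):ℂ))⁻¹ ^ k * ((-1:ℂ) ^ k
          * ((Real.exp (-u ^ 2 / ψ) : ℝ) : ℂ) * ((hermiteFun k (u / Real.sqrt ψ) : ℝ) : ℂ))) := by
    rw [← expand, ← key, D1, D3, hnegsq, hcu]
    simp only [hL, ContinuousLinearMap.smul_apply, Complex.ofRealCLM_apply, smul_eq_mul,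
      hsqrt, hc]
    push_cast
    ring
  have hQne : ((-2 : ℂ) * (Real.pi:ℂ) * Complex.I) ^ k ≠ 0 := by
    apply pow_ne_zero
    simp [Complex.I_ne_zero, Real.pi_ne_zero]
  have hPne : ((2 : ℂ) * (Real.pi:ℂ) * Complex.I) ^ k ≠ 0 := by
    apply pow_ne_zero
    simp [Complex.I_ne_zero, Real.pi_ne_zero]
  have hSne : (((Real.sqrt ψ : ℝ):ℂ)) ≠ 0 := Complex.ofReal_ne_zero.mpr hsψ.ne'
  have hTne : (((Real.sqrt Real.pi : ℝ):ℂ)) ≠ 0 := Complex.ofReal_ne_zero.mpr hsπ.ne'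
  have hI : (∫ x : ℝ, Complex.exp (-((ψ : ℂ) * (Real.pi : ℂ) ^ 2 * (x : ℂ) ^ 2)
        - 2 * (Real.pi : ℂ) * Complex.I * (x : ℂ) * (u : ℂ)) * (x : ℂ) ^ k)
      = (((-2 : ℂ) * (Real.pi:ℂ) * Complex.I) ^ k)⁻¹
        * ((1 / (((Real.sqrt ψ : ℝ):ℂ) * ((Real.sqrt Real.pi : ℝ):ℂ)))
          * ((((Real.sqrt ψ : ℝ):ℂ))⁻¹ ^ k * ((-1:ℂ) ^ k
            * ((Real.exp (-u ^ 2 / ψ) : ℝ) : ℂ) * ((hermiteFun k (u / Real.sqrt ψ) : ℝ) : ℂ)))) := by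
    rw [eq_inv_mul_iff_mul_eq₀ hQne]
    exact known
  have hneg : ((-2 : ℂ) * (Real.pi:ℂ) * Complex.I) ^ k
      = (-1:ℂ) ^ k * ((2 : ℂ) * (Real.pi:ℂ) * Complex.I) ^ k := by
    rw [← mul_pow]; ring_nf
  have hone : ((-1:ℂ) ^ k) * ((-1:ℂ) ^ k) = 1 := by
    rw [← pow_add]; exact Even.neg_one_pow ⟨k, rfl⟩
  rw [hI, hneg, mul_inv, ← inv_pow, inv_neg, inv_one]
  have hMne : ((-1:ℂ) ^ k) ≠ 0 := pow_ne_zero _ (by norm_num)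
  field_simp
  ring_nf
  rw [mul_comm k 2, pow_mul]
  norm_num
  left
  rw [mul_assoc, mul_inv_cancel₀ (pow_ne_zero _ hSne), mul_one]
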